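/- Let X be a real Hilbert space and C ⊆ X a nonempty convex set, d₂(y) = dist(y, C)². Then for all z, x ∈ X: 0 ≤ d₂(z+x) − 2·d₂(z) + d₂(z−x) ≤ 2‖x‖². -/
import Mathlib

open Metric

private lemma exists_proj {X : Type*} [NormedAddCommGroup X] [InnerProductSpace ℝ X]
    [CompleteSpace X] {D : Set X} (hne : D.Nonempty) (hcl : IsClosed D)
    (hconv : Convex ℝ D) (u : X) : ∃ v ∈ D, dist u v = infDist u D := by
  obtain ⟨v, hv, hveq⟩ := exists_norm_eq_iInf_of_complete_convex hne
    (hcl.isComplete) hconv u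
  refine ⟨v, hv, ?_⟩
  have : Nonempty D := hne.to_subtype
  rw [infDist_eq_iInf, dist_eq_norm, hveq]
  congr 1
  ext w
  rw [dist_eq_norm]

theorem stmt5 {X : Type*} [NormedAddCommGroup X] [InnerProductSpace ℝ X] [CompleteSpace X]
    (C : Set X) (hC : C.Nonempty) (hconv : Convex ℝ C) (z x : X) :
    0 ≤ (Metric.infDist (z + x) C) ^ 2 - 2 * (Metric.infDist z C) ^ 2
        + (Metric.infDist (z - x) C) ^ 2
    ∧ (Metric.infDist (z + x) C) ^ 2 - 2 * (Metric.infDist z C) ^ 2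
        + (Metric.infDist (z - x) C) ^ 2 ≤ 2 * ‖x‖ ^ 2 := by
  set D := closure C with hD
  have hne : D.Nonempty := hC.closure
  have hcl : IsClosed D := isClosed_closure
  have hconvD : Convex ℝ D := hconv.closure
  have h1 : infDist (z + x) C = infDist (z + x) D := (infDist_closure).symm
  have h2 : infDist z C = infDist z D := (infDist_closure).symm
  have h3 : infDist (z - x) C = infDist (z - x) D := (infDist_closure).symm
  rw [h1, h2, h3]
  obtain ⟨p, hp, hpe⟩ := exists_proj hne hcl hconvD (z + x)
  obtain ⟨q, hq, hqe⟩ := exists_proj hne hcl hconvD (z - x)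
  obtain ⟨r, hr, hre⟩ := exists_proj hne hcl hconvD z
  constructor
  · -- lower bound: d(z) ≤ dist z ((p+q)/2) ≤ (a+b)/2
    have hm : (1/2 : ℝ) • p + (1/2 : ℝ) • q ∈ D := by
      have := hconvD hp hq (by norm_num : (0:ℝ) ≤ 1/2) (by norm_num : (0:ℝ) ≤ 1/2)
        (by norm_num : (1/2 : ℝ) + 1/2 = 1)
      exact this
    have hle : infDist z D ≤ dist z ((1/2 : ℝ) • p + (1/2 : ℝ) • q) :=
      infDist_le_dist_of_mem hm
    have hd : dist z ((1/2 : ℝ) • p + (1/2 : ℝ) • q)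
        ≤ (dist (z + x) p + dist (z - x) q) / 2 := by
      have : z - ((1/2 : ℝ) • p + (1/2 : ℝ) • q)
          = (1/2 : ℝ) • ((z + x) - p) + (1/2 : ℝ) • ((z - x) - q) := by
        module
      rw [dist_eq_norm, this]
      calc ‖(1/2 : ℝ) • ((z + x) - p) + (1/2 : ℝ) • ((z - x) - q)‖
          ≤ ‖(1/2 : ℝ) • ((z + x) - p)‖ + ‖(1/2 : ℝ) • ((z - x) - q)‖ := norm_add_le _ _
        _ = (dist (z + x) p + dist (z - x) q) / 2 := by
            rw [norm_smul, norm_smul, dist_eq_norm, dist_eq_norm]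
            simp [Real.norm_eq_abs]
            ring
    have h0 : 0 ≤ infDist z D := infDist_nonneg
    have h0a : 0 ≤ infDist (z + x) D := infDist_nonneg
    have h0b : 0 ≤ infDist (z - x) D := infDist_nonneg
    rw [hpe, hqe] at hd
    have key : infDist z D ≤ (infDist (z + x) D + infDist (z - x) D) / 2 :=
      hle.trans hd
    nlinarith [sq_nonneg (infDist (z + x) D - infDist (z - x) D)]
  · -- upper bound via parallelogram law with r
    have ha : infDist (z + x) D ≤ dist (z + x) r := infDist_le_dist_of_mem hr
    have hb : infDist (z - x) D ≤ dist (z - x) r := infDist_le_dist_of_mem hr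
    have hpar : dist (z + x) r ^ 2 + dist (z - x) r ^ 2
        = 2 * (dist z r ^ 2 + ‖x‖ ^ 2) := by
      have := parallelogram_law_with_norm ℝ (z - r) x
      have e1 : z - r + x = (z + x) - r := by abel
      have e2 : z - r - x = (z - x) - r := by abel
      rw [e1, e2] at this
      simp only [dist_eq_norm]
      nlinarith [this]
    have h0a : 0 ≤ infDist (z + x) D := infDist_nonneg
    have h0b : 0 ≤ infDist (z - x) D := infDist_nonneg
    rw [← hre] at *
    nlinarith [ha, hb, dist_nonneg (x := z + x) (y := r), dist_nonneg (x := z - x) (y := r)]
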